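/- arXiv:2307.13474 — 2 statements merged into one kernel-verified Lean document; each statement's English description precedes it below -/
import Mathlib

section
/- (Theorem 2 achievability scheme) Fix a prime power q and K ≥ 2. Let W_1,…,W_K be F_q-valued random variables with arbitrary joint distribution and let N_1,…,N_K be i.i.d. uniform on F_q, with (N_1,…,N_K) independent of (W_1,…,W_K). Define Z_Σ = Z_k = (N_1,…,N_K) for every k, X_k = W_k + N_k, and, for every subset U ⊆ [K] and k ∈ U, Y_k^U = Σ_{u∈U} X_u. Then: (dropout correctness) Σ_{u∈U} W_u is a deterministic function of (Y_k^U, W_k, Z_k) for every U and k ∈ U; (server security) I(W_1,…,W_K ; X_1,…,X_K) = 0; (dropout user security) I(W_1,…,W_K ; Y_k^U | Σ_{u∈U} W_u, W_k, Z_k) = 0 for every U and k ∈ U. This protocol has L = 1, L_X = L_Y = 1, and each key Z_k as well as Z_Σ consists of K symbols of F_q, achieving the rate tuple (R_X, R_Y, R_Z, R_{Z_Σ}) = (1, 1, K, K). -/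
open Classical
open scoped BigOperators

/-- Probability of the event `E` under the probability mass function `p`
on a finite sample space `Ω`. -/
noncomputable def pr {Ω : Type*} [Fintype Ω] (p : Ω → ℝ) (E : Ω → Prop) : ℝ :=
  ∑ ω, if E ω then p ω else 0

/-- Shannon entropy of the random variable `X` in base-`q` units. -/
noncomputable def ent {Ω α : Type*} [Fintype Ω] [Fintype α] (q : ℕ) (p : Ω → ℝ)
    (X : Ω → α) : ℝ :=
  -∑ a, pr p (fun ω => X ω = a) * Real.logb q (pr p (fun ω => X ω = a))

/-- Conditional entropy `H(X | Y) = H(X, Y) − H(Y)`, base `q`. -/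
noncomputable def condEnt {Ω α β : Type*} [Fintype Ω] [Fintype α] [Fintype β]
    (q : ℕ) (p : Ω → ℝ) (X : Ω → α) (Y : Ω → β) : ℝ :=
  ent q p (fun ω => (X ω, Y ω)) - ent q p Y

/-- Mutual information `I(X ; Y) = H(X) + H(Y) − H(X, Y)`, base `q`. -/
noncomputable def mutInf {Ω α β : Type*} [Fintype Ω] [Fintype α] [Fintype β]
    (q : ℕ) (p : Ω → ℝ) (X : Ω → α) (Y : Ω → β) : ℝ :=
  ent q p X + ent q p Y - ent q p (fun ω => (X ω, Y ω))

/-- Conditional mutual information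
`I(X ; Y | Z) = H(X, Z) + H(Y, Z) − H(X, Y, Z) − H(Z)`, base `q`. -/
noncomputable def condMutInf {Ω α β γ : Type*} [Fintype Ω] [Fintype α] [Fintype β] [Fintype γ]
    (q : ℕ) (p : Ω → ℝ) (X : Ω → α) (Y : Ω → β) (Z : Ω → γ) : ℝ :=
  ent q p (fun ω => (X ω, Z ω)) + ent q p (fun ω => (Y ω, Z ω))
    - ent q p (fun ω => (X ω, Y ω, Z ω)) - ent q p Z

/- ## Auxiliary lemmas -/

lemma pr_congr {Ω : Type*} [Fintype Ω] (p : Ω → ℝ) {E E' : Ω → Prop}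
    (h : ∀ ω, E ω ↔ E' ω) : pr p E = pr p E' := by
  unfold pr; exact Finset.sum_congr rfl fun ω _ => by simp [h ω]

lemma pr_false {Ω : Type*} [Fintype Ω] (p : Ω → ℝ) {E : Ω → Prop}
    (h : ∀ ω, ¬ E ω) : pr p E = 0 := by
  unfold pr; exact Finset.sum_eq_zero fun ω _ => by simp [h ω]

lemma pr_total {Ω α : Type*} [Fintype Ω] [Fintype α] (p : Ω → ℝ) (E : Ω → Prop) (X : Ω → α) :
    pr p E = ∑ a, pr p (fun ω => E ω ∧ X ω = a) := by
  unfold pr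
  rw [Finset.sum_comm]
  refine Finset.sum_congr rfl fun ω _ => ?_
  by_cases h : E ω <;> simp [h]

lemma sum_pr_eq_one {Ω α : Type*} [Fintype Ω] [Fintype α] (p : Ω → ℝ)
    (hp1 : (∑ ω, p ω) = 1) (X : Ω → α) :
    (∑ a, pr p (fun ω => X ω = a)) = 1 := by
  have := pr_total p (fun _ => True) X
  simp only [true_and] at this
  rw [← this]
  unfold pr; simpa using hp1

lemma ent_comp_inj {Ω α β : Type*} [Fintype Ω] [Fintype α] [Fintype β]
    (q : ℕ) (p : Ω → ℝ) (X : Ω → α) (f : α → β) (hf : Function.Injective f) :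
    ent q p (fun ω => f (X ω)) = ent q p X := by
  unfold ent
  congr 1
  symm
  have hev : ∀ a, pr p (fun ω => X ω = a) = pr p (fun ω => f (X ω) = f a) := fun a =>
    pr_congr p fun ω => ⟨fun h => by rw [h], fun h => hf h⟩
  set G : β → ℝ := fun b => pr p (fun ω => f (X ω) = b) * Real.logb q (pr p (fun ω => f (X ω) = b))
    with hG
  calc ∑ a, pr p (fun ω => X ω = a) * Real.logb q (pr p (fun ω => X ω = a))
      = ∑ a, G (f a) := by simp_rw [hG, hev]
    _ = ∑ b ∈ Finset.univ.image f, G b :=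
        (Finset.sum_image (fun a _ a' _ h => hf h)).symm
    _ = ∑ b, G b := by
        refine Finset.sum_subset (Finset.subset_univ _) fun b _ hb => ?_
        have : pr p (fun ω => f (X ω) = b) = 0 := by
          refine pr_false p fun ω h => hb ?_
          exact Finset.mem_image.2 ⟨X ω, Finset.mem_univ _, h⟩
        simp [hG, this]

lemma mutInf_of_indep {Ω α β : Type*} [Fintype Ω] [Fintype α] [Fintype β]
    (q : ℕ) (p : Ω → ℝ) (hp1 : (∑ ω, p ω) = 1) (X : Ω → α) (Y : Ω → β)
    (h : ∀ a b, pr p (fun ω => X ω = a ∧ Y ω = b)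
        = pr p (fun ω => X ω = a) * pr p (fun ω => Y ω = b)) :
    mutInf q p X Y = 0 := by
  set P : α → ℝ := fun a => pr p (fun ω => X ω = a) with hP
  set Q : β → ℝ := fun b => pr p (fun ω => Y ω = b) with hQ
  have hPsum : ∑ a, P a = 1 := sum_pr_eq_one p hp1 X
  have hQsum : ∑ b, Q b = 1 := sum_pr_eq_one p hp1 Y
  have hJ : ∀ c : α × β, pr p (fun ω => (X ω, Y ω) = c) = P c.1 * Q c.2 := by
    rintro ⟨a, b⟩
    rw [pr_congr p (fun ω => by simp [Prod.ext_iff] :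
      ∀ ω, (X ω, Y ω) = (a, b) ↔ X ω = a ∧ Y ω = b)]
    exact h a b
  have key : ∀ a b, P a * Q b * Real.logb q (P a * Q b)
      = Q b * (P a * Real.logb q (P a)) + P a * (Q b * Real.logb q (Q b)) := by
    intro a b
    by_cases ha : P a = 0
    · simp [ha]
    by_cases hb : Q b = 0
    · simp [hb]
    rw [Real.logb_mul ha hb]; ring
  have hXY : ent q p (fun ω => (X ω, Y ω)) = ent q p X + ent q p Y := by
    unfold ent
    simp_rw [hJ]
    rw [Fintype.sum_prod_type]
    simp_rw [key, Finset.sum_add_distrib]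
    have e1 : ∑ a, ∑ b, Q b * (P a * Real.logb q (P a))
        = ∑ a, P a * Real.logb q (P a) := by
      refine Finset.sum_congr rfl fun a _ => ?_
      rw [← Finset.sum_mul, hQsum, one_mul]
    have e2 : ∑ a : α, ∑ b, P a * (Q b * Real.logb q (Q b))
        = ∑ b, Q b * Real.logb q (Q b) := by
      rw [Finset.sum_comm]
      refine Finset.sum_congr rfl fun b _ => ?_
      rw [← Finset.sum_mul, hPsum, one_mul]
    rw [e1, e2]; ring
  unfold mutInf
  rw [hXY]; ring

lemma condMutInf_of_fun {Ω α β γ : Type*} [Fintype Ω] [Fintype α] [Fintype β] [Fintype γ]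
    (q : ℕ) (p : Ω → ℝ) (X : Ω → α) (Y : Ω → β) (Z : Ω → γ) (g : γ → β)
    (hg : ∀ ω, Y ω = g (Z ω)) :
    condMutInf q p X Y Z = 0 := by
  have hY : Y = fun ω => g (Z ω) := funext hg
  subst hY
  unfold condMutInf
  have e1 : ent q p (fun ω => (g (Z ω), Z ω)) = ent q p Z :=
    ent_comp_inj q p Z (fun c => (g c, c)) (fun a b h => congrArg Prod.snd h)
  have e2 : ent q p (fun ω => (X ω, g (Z ω), Z ω)) = ent q p (fun ω => (X ω, Z ω)) :=
    ent_comp_inj q p (fun ω => (X ω, Z ω)) (fun c => (c.1, g c.2, c.2)) (by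
      intro a b h
      simp only [Prod.mk.injEq] at h
      exact Prod.ext h.1 h.2.2)
  rw [e1, e2]; ring

/-- **Theorem 2 achievability scheme.** With arbitrary inputs `W_k ∈ F` and
`N_1, …, N_K` i.i.d. uniform on `F` independent of the inputs, the scheme
`Z_Σ = Z_k = (N_1, …, N_K)`, `X_k = W_k + N_k`, `Y_k^U = Σ_{u ∈ U} X_u`
satisfies dropout correctness, server security and dropout user security,
achieving `(R_X, R_Y, R_Z, R_{Z_Σ}) = (1, 1, K, K)` (here `L = 1`,
`L_X = L_Y = 1`, `Z_k = Z_Σ ∈ F^K`). -/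
theorem theorem2_achievability_scheme
    (F : Type) [Field F] [Fintype F]
    (K : ℕ) (hK : 2 ≤ K)
    (Ω : Type) [Fintype Ω] (p : Ω → ℝ)
    (hp0 : ∀ ω, 0 ≤ p ω) (hp1 : (∑ ω, p ω) = 1)
    (W N : Fin K → Ω → F)
    -- (N_1, …, N_K) i.i.d. uniform on F and independent of (W_1, …, W_K)
    (hWN : ∀ (w n : Fin K → F),
      pr p (fun ω => (∀ k, W k ω = w k) ∧ (∀ k, N k ω = n k))
        = pr p (fun ω => ∀ k, W k ω = w k) * (1 / (Fintype.card F : ℝ)) ^ K) :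
    -- dropout correctness: Σ_{u ∈ U} W_u is a deterministic function of (Y_k^U, W_k, Z_k)
    (∀ (U : Finset (Fin K)), ∀ k ∈ U, ∃ d : F → F → (Fin K → F) → F, ∀ ω,
      (∑ u ∈ U, W u ω)
        = d (∑ u ∈ U, (W u ω + N u ω)) (W k ω) (fun u => N u ω)) ∧
    -- server security: I(W_1, …, W_K ; X_1, …, X_K) = 0
    (mutInf (Fintype.card F) p (fun ω => fun k => W k ω)
        (fun ω => fun k => W k ω + N k ω) = 0) ∧
    -- dropout user security: I(W_1, …, W_K ; Y_k^U | Σ_{u ∈ U} W_u, W_k, Z_k) = 0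
    (∀ (U : Finset (Fin K)), ∀ k ∈ U,
      condMutInf (Fintype.card F) p (fun ω => fun u => W u ω)
        (fun ω => ∑ u ∈ U, (W u ω + N u ω))
        (fun ω => (∑ u ∈ U, W u ω, W k ω, fun u => N u ω)) = 0) := by
  refine ⟨?_, ?_, ?_⟩
  · -- dropout correctness
    intro U k hk
    refine ⟨fun y _ n => y - ∑ u ∈ U, n u, fun ω => ?_⟩
    rw [Finset.sum_add_distrib]
    ring
  · -- server security
    set c : ℝ := (1 / (Fintype.card F : ℝ)) ^ K with hc
    have hJoint : ∀ (w x : Fin K → F),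
        pr p (fun ω => (fun k => W k ω) = w ∧ (fun k => W k ω + N k ω) = x)
          = pr p (fun ω => (fun k => W k ω) = w) * c := by
      intro w x
      have hiff : ∀ ω, ((fun k => W k ω) = w ∧ (fun k => W k ω + N k ω) = x)
          ↔ ((∀ k, W k ω = w k) ∧ (∀ k, N k ω = x k - w k)) := by
        intro ω
        constructor
        · rintro ⟨h1, h2⟩
          rw [funext_iff] at h1 h2
          refine ⟨h1, fun u => ?_⟩
          have h3 := h2 u
          rw [h1 u] at h3
          exact eq_sub_of_add_eq' h3
        · rintro ⟨h1, h2⟩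
          refine ⟨funext h1, funext fun u => ?_⟩
          rw [h1 u, h2 u]; ring
      rw [pr_congr p hiff, hWN w (fun u => x u - w u)]
      congr 1
      exact (pr_congr p fun ω => funext_iff).symm
    have hX : ∀ x : Fin K → F, pr p (fun ω => (fun k => W k ω + N k ω) = x) = c := by
      intro x
      rw [pr_total p _ (fun ω => fun k => W k ω)]
      have h' : ∀ w : Fin K → F,
          pr p (fun ω => (fun k => W k ω + N k ω) = x ∧ (fun k => W k ω) = w)
            = pr p (fun ω => (fun k => W k ω) = w) * c := by
        intro w
        rw [pr_congr p fun ω => and_comm]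
        exact hJoint w x
      simp_rw [h']
      rw [← Finset.sum_mul, sum_pr_eq_one p hp1, one_mul]
    refine mutInf_of_indep _ p hp1 _ _ fun w x => ?_
    rw [hJoint w x, hX x]
  · -- dropout user security
    intro U k hk
    refine condMutInf_of_fun _ p _ _ _
      (fun c : F × F × (Fin K → F) => c.1 + ∑ u ∈ U, c.2.2 u) fun ω => ?_
    simp [Finset.sum_add_distrib]
end

section
/- (Collusion in the dropout model) In the secure aggregation with an oblivious server and user dropouts model, assuming dropout correctness, if the server colludes with user 1 then all inputs are revealed: H(W_1, …, W_K | X_1, …, X_K, W_1, Z_1) = 0, i.e., the full input tuple (W_1,…,W_K) is almost surely a deterministic function of the first-phase messages (X_1,…,X_K) together with W_1 and Z_1. -/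
open Classical
open scoped BigOperators

section Aux

set_option linter.unusedSectionVars false

variable {Ω α β : Type*} [Fintype Ω] [Fintype α] [Fintype β] {p : Ω → ℝ}

lemma pfst {x a : α} {y b : β} (h : (x, y) = (a, b)) : x = a := congrArg Prod.fst h

lemma psnd {x a : α} {y b : β} (h : (x, y) = (a, b)) : y = b := congrArg Prod.snd h

lemma pr_nonneg (hp0 : ∀ ω, 0 ≤ p ω) (E : Ω → Prop) : 0 ≤ pr p E := by
  unfold pr
  exact Finset.sum_nonneg fun ω _ => by by_cases h : E ω <;> simp [h, hp0 ω]

lemma pr_pos (hp0 : ∀ ω, 0 ≤ p ω) {E : Ω → Prop} {ω : Ω} (hω : 0 < p ω) (hE : E ω) :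
    0 < pr p E := by
  unfold pr
  refine Finset.sum_pos' (fun ω' _ => ?_) ⟨ω, Finset.mem_univ ω, by simp [hE, hω]⟩
  by_cases h : E ω' <;> simp [h, hp0 ω']

lemma pr_pos_elim (hp0 : ∀ ω, 0 ≤ p ω) {E : Ω → Prop} (h : 0 < pr p E) :
    ∃ ω, 0 < p ω ∧ E ω := by
  by_contra hc
  push_neg at hc
  have : pr p E = 0 := by
    unfold pr
    refine Finset.sum_eq_zero fun ω _ => ?_
    by_cases hE : E ω
    · have := hc ω
      have hple : p ω ≤ 0 := by by_contra h'; push_neg at h'; exact (this h') hE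
      simp [hE, le_antisymm hple (hp0 ω)]
    · simp [hE]
  linarith

lemma pr_add_le (hp0 : ∀ ω, 0 ≤ p ω) {E E' G : Ω → Prop}
    (hdisj : ∀ ω, ¬(E ω ∧ E' ω)) (hE : ∀ ω, E ω → G ω) (hE' : ∀ ω, E' ω → G ω) :
    pr p E + pr p E' ≤ pr p G := by
  unfold pr
  rw [← Finset.sum_add_distrib]
  refine Finset.sum_le_sum fun ω _ => ?_
  by_cases h1 : E ω <;> by_cases h2 : E' ω
  · exact absurd ⟨h1, h2⟩ (hdisj ω)
  · simp [h1, h2, hE ω h1]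
  · simp [h1, h2, hE' ω h2]
  · by_cases h3 : G ω <;> simp [h1, h2, h3, hp0 ω]

lemma pr_pair_le (hp0 : ∀ ω, 0 ≤ p ω) (X : Ω → α) (Y : Ω → β) (a : α) (b : β) :
    pr p (fun ω => (X ω, Y ω) = (a, b)) ≤ pr p (fun ω => Y ω = b) := by
  unfold pr
  refine Finset.sum_le_sum fun ω _ => ?_
  by_cases hc : (X ω, Y ω) = (a, b)
  · simp [hc, pfst hc, psnd hc]
  · by_cases hd : Y ω = b
    · have hxa : ¬ X ω = a := fun h' => hc (by rw [h', hd])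
      simp [hc, hd, hxa, hp0 ω]
    · simp [hc, hd, hp0 ω]

lemma pr_decomp (X : Ω → α) (Y : Ω → β) (b : β) :
    pr p (fun ω => Y ω = b) = ∑ a, pr p (fun ω => (X ω, Y ω) = (a, b)) := by
  unfold pr
  rw [Finset.sum_comm]
  refine Finset.sum_congr rfl fun ω _ => ?_
  by_cases h : Y ω = b
  · simp [h, Prod.ext_iff]
  · simp [h, Prod.ext_iff]

lemma condEnt_eq_sum (q : ℕ) (p : Ω → ℝ) (X : Ω → α) (Y : Ω → β) :
    condEnt q p X Y = ∑ a, ∑ b,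
      pr p (fun ω => (X ω, Y ω) = (a, b)) *
        (Real.logb q (pr p (fun ω => Y ω = b))
          - Real.logb q (pr p (fun ω => (X ω, Y ω) = (a, b)))) := by
  unfold condEnt ent
  rw [Fintype.sum_prod_type]
  simp only [mul_sub, Finset.sum_sub_distrib]
  have h1 : ∀ b : β, (∑ a, pr p (fun ω => (X ω, Y ω) = (a, b)))
      = pr p (fun ω => Y ω = b) := fun b => (pr_decomp X Y b).symm
  have h2 : (∑ a, ∑ b, pr p (fun ω => (X ω, Y ω) = (a, b))
        * Real.logb q (pr p (fun ω => Y ω = b)))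
      = ∑ b, pr p (fun ω => Y ω = b) * Real.logb q (pr p (fun ω => Y ω = b)) := by
    rw [Finset.sum_comm]
    refine Finset.sum_congr rfl fun b _ => ?_
    rw [← Finset.sum_mul, h1]
  rw [h2]
  ring

lemma term_nonneg {q : ℕ} (hq : 1 < q) {t s : ℝ} (ht : 0 ≤ t) (hts : t ≤ s) :
    0 ≤ t * (Real.logb q s - Real.logb q t) := by
  rcases eq_or_lt_of_le ht with h | h
  · simp [← h]
  · have hq' : (1 : ℝ) < (q : ℝ) := by exact_mod_cast hq
    have := Real.logb_le_logb_of_le hq' h hts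
    nlinarith

lemma condEnt_eq_zero_iff {q : ℕ} (hq : 1 < q) (hp0 : ∀ ω, 0 ≤ p ω)
    (X : Ω → α) (Y : Ω → β) :
    condEnt q p X Y = 0 ↔
      ∀ ω ω', 0 < p ω → 0 < p ω' → Y ω = Y ω' → X ω = X ω' := by
  have hq' : (1 : ℝ) < (q : ℝ) := by exact_mod_cast hq
  rw [condEnt_eq_sum]
  constructor
  · intro h ω ω' hω hω' hYY
    by_contra hne
    -- each term is zero
    have hterm : ∀ a b, pr p (fun ω => (X ω, Y ω) = (a, b)) *
        (Real.logb q (pr p (fun ω => Y ω = b))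
          - Real.logb q (pr p (fun ω => (X ω, Y ω) = (a, b)))) = 0 := by
      have h0 := (Finset.sum_eq_zero_iff_of_nonneg (fun a _ =>
        Finset.sum_nonneg fun b _ => term_nonneg hq (pr_nonneg hp0 _)
          (pr_pair_le hp0 X Y a b))).mp h
      intro a b
      have h1 := (Finset.sum_eq_zero_iff_of_nonneg (fun b _ =>
        term_nonneg hq (pr_nonneg hp0 _) (pr_pair_le hp0 X Y a b))).mp
        (h0 a (Finset.mem_univ a))
      exact h1 b (Finset.mem_univ b)
    -- deduce P(a,b) = P(b) when P(a,b) > 0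
    have key : ∀ (a : α) (ωx : Ω), 0 < p ωx → X ωx = a → Y ωx = Y ω →
        pr p (fun ω'' => (X ω'', Y ω'') = (a, Y ω)) = pr p (fun ω'' => Y ω'' = Y ω) := by
      intro a ωx hpx hXx hYx
      have hpos : 0 < pr p (fun ω'' => (X ω'', Y ω'') = (a, Y ω)) :=
        pr_pos hp0 hpx (by rw [hXx, hYx])
      rcases eq_or_lt_of_le (pr_pair_le hp0 X Y a (Y ω)) with h' | h'
      · exact h'
      · exfalso
        have := hterm a (Y ω)
        have hlt := Real.logb_lt_logb hq' hpos h'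
        nlinarith
    have e1 := key (X ω) ω hω rfl rfl
    have e2 := key (X ω') ω' hω' rfl hYY.symm
    have hsum := pr_add_le hp0 (E := fun ω'' => (X ω'', Y ω'') = (X ω, Y ω))
      (E' := fun ω'' => (X ω'', Y ω'') = (X ω', Y ω))
      (G := fun ω'' => Y ω'' = Y ω)
      (fun ω'' ⟨u, v⟩ => hne (((pfst u).symm).trans (pfst v)))
      (fun ω'' u => psnd u) (fun ω'' u => psnd u)
    have hbpos : 0 < pr p (fun ω'' => Y ω'' = Y ω) := pr_pos hp0 hω rfl
    rw [e1, e2] at hsum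
    linarith
  · intro h
    refine Finset.sum_eq_zero fun a _ => Finset.sum_eq_zero fun b _ => ?_
    by_cases hP : pr p (fun ω => (X ω, Y ω) = (a, b)) = 0
    · rw [hP, zero_mul]
    · have hpos : 0 < pr p (fun ω => (X ω, Y ω) = (a, b)) :=
        lt_of_le_of_ne (pr_nonneg hp0 _) (Ne.symm hP)
      obtain ⟨ω, hω, hE⟩ := pr_pos_elim hp0 hpos
      have hXa : X ω = a := pfst hE
      have hYb : Y ω = b := psnd hE
      have heq : pr p (fun ω => Y ω = b) = pr p (fun ω => (X ω, Y ω) = (a, b)) := by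
        rw [pr_decomp X Y b]
        refine Finset.sum_eq_single a (fun a' _ ha' => ?_) (by simp)
        by_contra hz
        have hpos' : 0 < pr p (fun ω => (X ω, Y ω) = (a', b)) :=
          lt_of_le_of_ne (pr_nonneg hp0 _) (Ne.symm hz)
        obtain ⟨ω', hω', hE'⟩ := pr_pos_elim hp0 hpos'
        have hx : X ω' = X ω := h ω' ω hω' hω (by rw [psnd hE', hYb])
        exact ha' (by rw [← pfst hE', hx, hXa])
      rw [heq]
      simp

end Aux

/-- **Collusion in the dropout model.** Assuming dropout correctness, if the server
colludes with user 1 then all inputs are revealed: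
`H(W_1, …, W_K | X_1, …, X_K, W_1, Z_1) = 0`, i.e. the full input tuple is almost
surely a deterministic function of `(X_1, …, X_K, W_1, Z_1)`. -/
theorem collusion_dropout_model
    (F : Type) [Field F] [Fintype F]
    (K L LX LY : ℕ) (hK : 2 ≤ K) (hL : 1 ≤ L)
    (Ω : Type) [Fintype Ω] (p : Ω → ℝ)
    (hp0 : ∀ ω, 0 ≤ p ω) (hp1 : (∑ ω, p ω) = 1)
    (ZT : Fin K → Type) [∀ k, Fintype (ZT k)]
    (W : Fin K → Ω → Fin L → F)
    (Z : (k : Fin K) → Ω → ZT k)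
    (X : Fin K → Ω → Fin LX → F)
    (Y : Finset (Fin K) → Fin K → Ω → Fin LY → F)
    -- inputs i.i.d. uniform on F^L and independent of the keys
    (hWZ : ∀ (w : Fin K → Fin L → F) (z : (k : Fin K) → ZT k),
      pr p (fun ω => (∀ k, W k ω = w k) ∧ (∀ k, Z k ω = z k))
        = (1 / (Fintype.card F : ℝ) ^ L) ^ K * pr p (fun ω => ∀ k, Z k ω = z k))
    -- deterministic encoders X_k = φ_k(W_k, Z_k)
    (hX : ∀ k, ∃ φ : (Fin L → F) → ZT k → Fin LX → F, ∀ ω, X k ω = φ (W k ω) (Z k ω))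
    -- deterministic server maps Y_k^U = ψ_k^U((X_u)_{u ∈ U})
    (hY : ∀ (U : Finset (Fin K)), ∀ k ∈ U,
      ∃ ψ : ((u : {u : Fin K // u ∈ U}) → Fin LX → F) → Fin LY → F,
        ∀ ω, Y U k ω = ψ (fun u => X u.1 ω))
    -- dropout correctness: H(Σ_{u ∈ U} W_u | Y_k^U, W_k, Z_k) = 0
    (hCorr : ∀ (U : Finset (Fin K)), ∀ k ∈ U,
      condEnt (Fintype.card F) p (fun ω => ∑ u ∈ U, W u ω)
        (fun ω => (Y U k ω, W k ω, Z k ω)) = 0) :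
    condEnt (Fintype.card F) p (fun ω => fun k => W k ω)
      (fun ω => (fun k => X k ω, W ⟨0, by omega⟩ ω, Z ⟨0, by omega⟩ ω)) = 0 := by
  classical
  have hq : 1 < Fintype.card F := Fintype.one_lt_card
  set k0 : Fin K := ⟨0, by omega⟩ with hk0
  rw [condEnt_eq_zero_iff hq hp0]
  intro ω ω' hω hω' hYc
  have hXe : (fun k => X k ω) = (fun k => X k ω') := congrArg Prod.fst hYc
  have hW0 : W k0 ω = W k0 ω' := congrArg (fun t => t.2.1) hYc
  have hZ0 : Z k0 ω = Z k0 ω' := congrArg (fun t => t.2.2) hYc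
  funext k
  by_cases hk : k = k0
  · rw [hk]; exact hW0
  · set U : Finset (Fin K) := {k0, k} with hU
    have hk0U : k0 ∈ U := by simp [hU]
    have hYeq : Y U k0 ω = Y U k0 ω' := by
      obtain ⟨ψ, hψ⟩ := hY U k0 hk0U
      have harg : (fun u : {u : Fin K // u ∈ U} => X u.1 ω)
          = (fun u : {u : Fin K // u ∈ U} => X u.1 ω') := by
        funext v
        exact congrFun hXe v.1
      rw [hψ, hψ, harg]
    have hdet := (condEnt_eq_zero_iff hq hp0
      (fun ω => ∑ u ∈ U, W u ω)
      (fun ω => (Y U k0 ω, W k0 ω, Z k0 ω))).mp (hCorr U k0 hk0U)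
    have hsum : (∑ u ∈ U, W u ω) = ∑ u ∈ U, W u ω' := by
      refine hdet ω ω' hω hω' ?_
      rw [hYeq, hW0, hZ0]
    rw [hU, Finset.sum_pair (fun h => hk h.symm), Finset.sum_pair (fun h => hk h.symm),
      hW0] at hsum
    exact add_left_cancel hsum
end
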